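/- There exist rates λ ∈ [0,1]^3 with λ_1 + λ_2 < 1 and λ_2 + λ_3 < 1 such that, under the outer-queue-priority MSM policy π_OQ defined by S(t) = (1,0,1) if Q_1(t) > 0 or Q_3(t) > 0 and S(t) = (0,1,0) otherwise, the middle queue is unstable: limsup_{T→∞} (1/T) ∑_{t=0}^{T−1} E[Q_2(t)] = ∞. In particular, π_OQ is a maximum-size-matching policy that is not throughput-optimal. -/

import Mathlib

open MeasureTheory ProbabilityTheory Filter
open scoped ENNReal

/-- The outer-queue-priority MSM policy π_OQ for the 3-queue path graph:
serve queues 1 and 3 if either is nonempty, and serve queue 2 otherwise. -/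
def piOQ (q : Fin 3 → ℕ) : Fin 3 → ℕ :=
  if 0 < q 0 ∨ 0 < q 2 then ![1, 0, 1] else ![0, 1, 0]

/-- π_OQ is an MSM policy that is not throughput-optimal: there are rates in the interior of
the capacity region for which, in every system evolving under π_OQ with those rates, the
middle queue is unstable (the time-averaged expected backlog of queue 2 has limsup = ∞). -/
theorem piOQ_not_throughput_optimal :
    ∃ lam : Fin 3 → ℝ,
      (∀ i, 0 ≤ lam i ∧ lam i ≤ 1) ∧ lam 0 + lam 1 < 1 ∧ lam 1 + lam 2 < 1 ∧
      ∀ (Ω : Type) [MeasurableSpace Ω] (μ : Measure Ω) [IsProbabilityMeasure μ]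
        (A : Fin 3 → ℕ → Ω → ℕ),
        (∀ i t, Measurable (A i t)) →
        (∀ i t ω, A i t ω ≤ 1) →
        (∀ i t, μ {ω | A i t ω = 1} = ENNReal.ofReal (lam i)) →
        iIndepFun
          (fun p : Fin 3 × ℕ => fun ω => A p.1 p.2 ω) μ →
        ∀ Q : ℕ → Fin 3 → Ω → ℕ,
          (∀ i ω, Q 0 i ω = 0) →
          (∀ t i ω, Q (t + 1) i ω = Q t i ω - piOQ (fun j => Q t j ω) i + A i t ω) →
          limsup (fun T : ℕ =>
              (∑ t ∈ Finset.range T, ∫⁻ ω, (Q t 1 ω : ℝ≥0∞) ∂μ) / (T : ℝ≥0∞))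
            atTop = ⊤ := by
  refine ⟨![3/4, 1/8, 3/4], ?_, ?_, ?_, ?_⟩
  · intro i; fin_cases i <;> norm_num
  · norm_num
  · norm_num [Matrix.cons_val_two]
  intro Ω _ μ _ A hAmeas hAle hArate hInd Q hQ0 hQrec
  set c : ℝ≥0∞ := ENNReal.ofReal (1/16) with hc
  -- outer queues are 0/1-valued
  have hbound : ∀ t ω, Q t 0 ω ≤ 1 ∧ Q t 2 ω ≤ 1 := by
    intro t
    induction t with
    | zero => intro ω; simp [hQ0]
    | succ s ih =>
      intro ω
      have h1 := (ih ω).1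
      have h2 := (ih ω).2
      have hA0 := hAle 0 s ω
      have hA2 := hAle 2 s ω
      rw [hQrec, hQrec]
      unfold piOQ
      by_cases h : 0 < Q s 0 ω ∨ 0 < Q s 2 ω <;> simp [h] <;> omega
  -- outer queues equal last arrival
  have hQA0 : ∀ t ω, Q (t + 1) 0 ω = A 0 t ω := by
    intro t ω
    have h1 := (hbound t ω).1
    rw [hQrec]
    unfold piOQ
    by_cases h : 0 < Q t 0 ω ∨ 0 < Q t 2 ω <;> simp [h] <;> omega
  have hQA2 : ∀ t ω, Q (t + 1) 2 ω = A 2 t ω := by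
    intro t ω
    have h2 := (hbound t ω).2
    rw [hQrec]
    unfold piOQ
    by_cases h : 0 < Q t 0 ω ∨ 0 < Q t 2 ω <;> simp [h] <;> omega
  -- the service indicator for queue 1
  set B : ℕ → Ω → ℕ := fun t ω => if 0 < Q t 0 ω ∨ 0 < Q t 2 ω then 0 else 1 with hBdef
  have hserve : ∀ t ω, Q t 1 ω + A 1 t ω ≤ Q (t + 1) 1 ω + B t ω := by
    intro t ω
    rw [hQrec]
    unfold piOQ
    simp only [hBdef]
    by_cases h : 0 < Q t 0 ω ∨ 0 < Q t 2 ω <;> simp [h] <;> omega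
  have hsum : ∀ T ω, (∑ t ∈ Finset.range T, A 1 t ω) ≤
      Q T 1 ω + ∑ t ∈ Finset.range T, B t ω := by
    intro T ω
    induction T with
    | zero => simp [hQ0]
    | succ s ih =>
      rw [Finset.sum_range_succ, Finset.sum_range_succ]
      have := hserve s ω
      omega
  -- representation of B
  have hB0 : B 0 = fun _ => 1 := by
    funext ω; simp [hBdef, hQ0]
  have hBrep : ∀ s, B (s + 1) = fun ω => if 0 < A 0 s ω ∨ 0 < A 2 s ω then 0 else 1 := by
    intro s; funext ω; simp only [hBdef, hQA0, hQA2]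
  -- measurability of B (as ℝ≥0∞-valued)
  have hBmeas : ∀ t, Measurable (fun ω => (B t ω : ℝ≥0∞)) := by
    intro t
    refine Measurable.comp (Measurable.of_discrete) ?_
    match t with
    | 0 => rw [hB0]; exact measurable_const
    | s + 1 =>
      rw [hBrep s]
      refine Measurable.ite ?_ measurable_const measurable_const
      exact ((hAmeas 0 s .of_discrete).union (hAmeas 2 s .of_discrete))
  -- integral of arrivals
  have hA_int : ∀ (i : Fin 3) t, ∫⁻ ω, (A i t ω : ℝ≥0∞) ∂μ = μ {ω | A i t ω = 1} := by
    intro i t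
    have hms : MeasurableSet {ω | A i t ω = 1} := hAmeas i t (measurableSet_singleton 1)
    have heq : (fun ω => (A i t ω : ℝ≥0∞)) = Set.indicator {ω | A i t ω = 1} 1 := by
      funext ω
      by_cases h : A i t ω = 1
      · simp [Set.indicator, h]
      · have h0 : A i t ω = 0 := by have := hAle i t ω; omega
        simp [Set.indicator, h, h0]
    rw [heq, lintegral_indicator_one hms]
  have hA1_int : ∀ t, ∫⁻ ω, (A 1 t ω : ℝ≥0∞) ∂μ = ENNReal.ofReal (1/8) := by
    intro t
    rw [hA_int 1 t, hArate 1 t]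
    norm_num
  -- probability an outer arrival is zero
  have hA0prob : ∀ (i : Fin 3) t, i = 0 ∨ i = 2 →
      μ {ω | A i t ω = 0} = ENNReal.ofReal (1/4) := by
    intro i t hi
    have hms : MeasurableSet {ω | A i t ω = 1} := hAmeas i t (measurableSet_singleton 1)
    have hcompl : {ω | A i t ω = 0} = {ω | A i t ω = 1}ᶜ := by
      ext ω
      have := hAle i t ω
      simp only [Set.mem_setOf_eq, Set.mem_compl_iff]
      omega
    rw [hcompl, measure_compl hms (measure_ne_top μ _), measure_univ, hArate i t]
    have hlam : (![3/4, 1/8, 3/4] : Fin 3 → ℝ) i = 3/4 := by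
      rcases hi with h | h <;> subst h <;> norm_num [Matrix.cons_val_two]
    rw [hlam, show (1 : ℝ≥0∞) = ENNReal.ofReal 1 by simp,
      ← ENNReal.ofReal_sub _ (by norm_num : (0:ℝ) ≤ 3/4)]
    norm_num
  -- integral of B (s+1) via independence
  have hB_int : ∀ s, ∫⁻ ω, (B (s + 1) ω : ℝ≥0∞) ∂μ = c := by
    intro s
    have heq : (fun ω => (B (s + 1) ω : ℝ≥0∞)) =
        Set.indicator ((A 0 s ⁻¹' {0}) ∩ (A 2 s ⁻¹' {0})) 1 := by
      funext ω
      rw [hBrep s]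
      by_cases h0 : A 0 s ω = 0 <;> by_cases h2 : A 2 s ω = 0 <;>
        simp [Set.indicator, h0, h2] <;> omega
    have hms0 : MeasurableSet (A 0 s ⁻¹' ({0} : Set ℕ)) := hAmeas 0 s (measurableSet_singleton 0)
    have hms2 : MeasurableSet (A 2 s ⁻¹' ({0} : Set ℕ)) := hAmeas 2 s (measurableSet_singleton 0)
    rw [heq, lintegral_indicator_one (hms0.inter hms2)]
    have hind : IndepFun (fun ω => A 0 s ω) (fun ω => A 2 s ω) μ := by
      exact hInd.indepFun (show ((0 : Fin 3), s) ≠ ((2 : Fin 3), s) by simp)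
    have := hind.measure_inter_preimage_eq_mul ({0} : Set ℕ) ({0} : Set ℕ)
      (measurableSet_singleton 0) (measurableSet_singleton 0)
    rw [this]
    have e0 : μ (A 0 s ⁻¹' ({0} : Set ℕ)) = ENNReal.ofReal (1/4) := hA0prob 0 s (Or.inl rfl)
    have e2 : μ (A 2 s ⁻¹' ({0} : Set ℕ)) = ENNReal.ofReal (1/4) := hA0prob 2 s (Or.inr rfl)
    rw [e0, e2, ← ENNReal.ofReal_mul (by norm_num : (0:ℝ) ≤ 1/4), hc]
    norm_num
  have hB0_int : ∫⁻ ω, (B 0 ω : ℝ≥0∞) ∂μ = 1 := by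
    rw [hB0]
    simp
  -- sum of B integrals
  have hBsum : ∀ T, (∑ t ∈ Finset.range T, ∫⁻ ω, (B t ω : ℝ≥0∞) ∂μ) ≤ (T : ℝ≥0∞) * c + 1 := by
    intro T
    match T with
    | 0 => simp
    | n + 1 =>
      rw [Finset.sum_range_succ']
      have h1 : (∑ t ∈ Finset.range n, ∫⁻ ω, (B (t + 1) ω : ℝ≥0∞) ∂μ) = (n : ℝ≥0∞) * c := by
        rw [Finset.sum_congr rfl (fun t _ => hB_int t)]
        simp [Finset.sum_const, mul_comm]
      rw [h1, hB0_int]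
      gcongr
      exact_mod_cast Nat.le_succ n
  -- key inequality: T * c ≤ E[Q T 1] + 1
  have hkey : ∀ T : ℕ, (T : ℝ≥0∞) * c ≤ (∫⁻ ω, (Q T 1 ω : ℝ≥0∞) ∂μ) + 1 := by
    intro T
    have hLHS : (T : ℝ≥0∞) * ENNReal.ofReal (1/8) =
        ∫⁻ ω, (∑ t ∈ Finset.range T, (A 1 t ω : ℝ≥0∞)) ∂μ := by
      rw [lintegral_finset_sum _ (fun t _ => by
        exact Measurable.comp .of_discrete (hAmeas 1 t))]
      rw [Finset.sum_congr rfl (fun t _ => hA1_int t)]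
      simp [Finset.sum_const, mul_comm]
    have hmono : ∫⁻ ω, (∑ t ∈ Finset.range T, (A 1 t ω : ℝ≥0∞)) ∂μ ≤
        ∫⁻ ω, ((Q T 1 ω : ℝ≥0∞) + ∑ t ∈ Finset.range T, (B t ω : ℝ≥0∞)) ∂μ := by
      refine lintegral_mono fun ω => ?_
      have := hsum T ω
      calc (∑ t ∈ Finset.range T, (A 1 t ω : ℝ≥0∞))
          = ((∑ t ∈ Finset.range T, A 1 t ω : ℕ) : ℝ≥0∞) := by push_cast; ring
        _ ≤ ((Q T 1 ω + ∑ t ∈ Finset.range T, B t ω : ℕ) : ℝ≥0∞) := by exact_mod_cast this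
        _ = (Q T 1 ω : ℝ≥0∞) + ∑ t ∈ Finset.range T, (B t ω : ℝ≥0∞) := by push_cast; ring
    have hsplit : ∫⁻ ω, ((Q T 1 ω : ℝ≥0∞) + ∑ t ∈ Finset.range T, (B t ω : ℝ≥0∞)) ∂μ =
        (∫⁻ ω, (Q T 1 ω : ℝ≥0∞) ∂μ) + ∑ t ∈ Finset.range T, ∫⁻ ω, (B t ω : ℝ≥0∞) ∂μ := by
      rw [lintegral_add_right _ (by exact Finset.measurable_sum _ (fun t _ => hBmeas t))]
      rw [lintegral_finset_sum _ (fun t _ => hBmeas t)]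
    have hchain : (T : ℝ≥0∞) * ENNReal.ofReal (1/8) ≤
        ((∫⁻ ω, (Q T 1 ω : ℝ≥0∞) ∂μ) + 1) + (T : ℝ≥0∞) * c := by
      calc (T : ℝ≥0∞) * ENNReal.ofReal (1/8)
          ≤ (∫⁻ ω, (Q T 1 ω : ℝ≥0∞) ∂μ) + ∑ t ∈ Finset.range T, ∫⁻ ω, (B t ω : ℝ≥0∞) ∂μ := by
            rw [hLHS]; rw [← hsplit]; exact hmono
        _ ≤ (∫⁻ ω, (Q T 1 ω : ℝ≥0∞) ∂μ) + ((T : ℝ≥0∞) * c + 1) := by gcongr; exact hBsum T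
        _ = ((∫⁻ ω, (Q T 1 ω : ℝ≥0∞) ∂μ) + 1) + (T : ℝ≥0∞) * c := by ring
    have h18 : ENNReal.ofReal (1/8) = c + c := by
      rw [hc, ← ENNReal.ofReal_add (by norm_num) (by norm_num)]
      norm_num
    rw [h18, mul_add] at hchain
    have hct : (T : ℝ≥0∞) * c ≠ ⊤ :=
      ENNReal.mul_ne_top (ENNReal.natCast_ne_top T) ENNReal.ofReal_ne_top
    exact (WithTop.add_le_add_iff_right hct).mp hchain
  -- summed inequality
  have hkey2 : ∀ T : ℕ, (∑ t ∈ Finset.range T, (t : ℝ≥0∞)) * c ≤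
      (∑ t ∈ Finset.range T, ∫⁻ ω, (Q t 1 ω : ℝ≥0∞) ∂μ) + T := by
    intro T
    rw [Finset.sum_mul]
    calc (∑ t ∈ Finset.range T, (t : ℝ≥0∞) * c)
        ≤ ∑ t ∈ Finset.range T, ((∫⁻ ω, (Q t 1 ω : ℝ≥0∞) ∂μ) + 1) :=
          Finset.sum_le_sum fun t _ => hkey t
      _ = (∑ t ∈ Finset.range T, ∫⁻ ω, (Q t 1 ω : ℝ≥0∞) ∂μ) + T := by
          rw [Finset.sum_add_distrib]
          simp [Finset.sum_const]
  -- conclude: the averaged expected backlog tends to ⊤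
  have htend : Tendsto (fun T : ℕ =>
      (∑ t ∈ Finset.range T, ∫⁻ ω, (Q t 1 ω : ℝ≥0∞) ∂μ) / (T : ℝ≥0∞)) atTop (nhds ⊤) := by
    refine ENNReal.tendsto_nhds_top fun n => ?_
    filter_upwards [eventually_ge_atTop (32 * (n + 2) + 1)] with T hT
    have hT1 : 1 ≤ T := by omega
    have hT0 : (T : ℝ≥0∞) ≠ 0 := by exact_mod_cast (show T ≠ 0 by omega)
    have hTtop : (T : ℝ≥0∞) ≠ ⊤ := ENNReal.natCast_ne_top T
    -- natural-number inequality
    have hnat : (n + 2) * T * 16 ≤ ∑ t ∈ Finset.range T, t := by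
      have h2 : (∑ t ∈ Finset.range T, t) * 2 = T * (T - 1) := Finset.sum_range_id_mul_two T
      have h3 : (n + 2) * T * 16 * 2 = T * (32 * (n + 2)) := by ring
      have h4 : T * (32 * (n + 2)) ≤ T * (T - 1) :=
        Nat.mul_le_mul_left T (by omega)
      omega
    -- cast to ℝ≥0∞
    have hcast : ((n : ℝ≥0∞) + 2) * T * 16 ≤ ∑ t ∈ Finset.range T, (t : ℝ≥0∞) := by
      have : (((n + 2) * T * 16 : ℕ) : ℝ≥0∞) ≤ ((∑ t ∈ Finset.range T, t : ℕ) : ℝ≥0∞) :=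
        Nat.cast_le.mpr hnat
      push_cast at this
      exact this
    have h16 : c = (16 : ℝ≥0∞)⁻¹ := by
      rw [hc, show (1 : ℝ) / 16 = (16 : ℝ)⁻¹ by norm_num,
        ENNReal.ofReal_inv_of_pos (by norm_num)]
      norm_num
    have hstep1 : ((n : ℝ≥0∞) + 2) * T ≤ (∑ t ∈ Finset.range T, (t : ℝ≥0∞)) * c := by
      rw [h16]
      calc ((n : ℝ≥0∞) + 2) * T = ((n : ℝ≥0∞) + 2) * T * 16 * 16⁻¹ := by
            rw [mul_assoc, ENNReal.mul_inv_cancel (by norm_num) (by norm_num), mul_one]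
        _ ≤ (∑ t ∈ Finset.range T, (t : ℝ≥0∞)) * 16⁻¹ := by gcongr
    have hstep2 : ((n : ℝ≥0∞) + 2) ≤
        ((∑ t ∈ Finset.range T, ∫⁻ ω, (Q t 1 ω : ℝ≥0∞) ∂μ) + T) / T := by
      calc ((n : ℝ≥0∞) + 2) = ((n : ℝ≥0∞) + 2) * T / T := by
            rw [mul_div_assoc, ENNReal.div_self hT0 hTtop, mul_one]
        _ ≤ ((∑ t ∈ Finset.range T, (t : ℝ≥0∞)) * c) / T :=
            ENNReal.div_le_div_right hstep1 _
        _ ≤ ((∑ t ∈ Finset.range T, ∫⁻ ω, (Q t 1 ω : ℝ≥0∞) ∂μ) + T) / T :=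
            ENNReal.div_le_div_right (hkey2 T) _
    rw [ENNReal.add_div, ENNReal.div_self hT0 hTtop] at hstep2
    have hfin : (n : ℝ≥0∞) + 1 ≤
        (∑ t ∈ Finset.range T, ∫⁻ ω, (Q t 1 ω : ℝ≥0∞) ∂μ) / T := by
      rw [show ((n : ℝ≥0∞) + 2) = ((n : ℝ≥0∞) + 1) + 1 by ring] at hstep2
      exact (WithTop.add_le_add_iff_right ENNReal.one_ne_top).mp hstep2
    exact lt_of_lt_of_le (ENNReal.lt_add_right (ENNReal.natCast_ne_top n) one_ne_zero) hfin
  exact htend.limsup_eq
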